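/- arXiv:1503.04933 — 2 statements merged into one kernel-verified Lean document; each statement's English description precedes it below -/
import Mathlib

section
/- For integers m ≥ 1, r ≥ 1, n ≥ 0: Σ_{l=1}^{m} [(-1)^{l+m} · l! · S(m,l) / (r+l-1)!] · Σ_{k=1}^{r+l-1} c(r+l-1, k) · B_n^{(-k)} = Σ_{l=1}^{m} (-1)^{l+m} · l! · S(m,l) · (r+l)^n. -/
open Finset

/-- Stirling numbers of the second kind. -/
def S2 : ℕ → ℕ → ℕ
  | 0, 0 => 1
  | 0, _ + 1 => 0
  | _ + 1, 0 => 0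
  | n + 1, k + 1 => S2 n k + (k + 1) * S2 n (k + 1)

/-- Unsigned Stirling numbers of the first kind. -/
def S1 : ℕ → ℕ → ℕ
  | 0, 0 => 1
  | 0, _ + 1 => 0
  | _ + 1, 0 => 0
  | n + 1, k + 1 => S1 n k + n * S1 n (k + 1)

/-- Poly-Bernoulli number of negative index `B_n^{(-k)}` (closed power-sum formula). -/
def polyB (n k : ℕ) : ℤ :=
  ∑ l ∈ Finset.Icc 1 k, (-1 : ℤ) ^ (l + k) * (Nat.factorial l) * S2 k l * ((l : ℤ) + 1) ^ n

/-- Rising factorial `(r)_l = r (r+1) ⋯ (r+l-1)`. -/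
def risingFact (r l : ℕ) : ℕ := ∏ i ∈ Finset.range l, (r + i)

lemma S1_eq_zero : ∀ N k, N < k → S1 N k = 0 := by
  intro N
  induction N with
  | zero => intro k hk; match k, hk with | k+1, _ => rfl
  | succ n ih =>
    intro k hk
    match k, hk with
    | k+1, hk =>
      show S1 n k + n * S1 n (k+1) = 0
      rw [ih k (by omega), ih (k+1) (by omega)]; ring

lemma S2_eq_zero : ∀ N k, N < k → S2 N k = 0 := by
  intro N
  induction N with
  | zero => intro k hk; match k, hk with | k+1, _ => rfl
  | succ n ih =>
    intro k hk
    match k, hk with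
    | k+1, hk =>
      show S2 n k + (k+1) * S2 n (k+1) = 0
      rw [ih k (by omega), ih (k+1) (by omega)]; ring

lemma sum_shift (f : ℕ → ℤ) (N : ℕ) (h : f (N+1) = 0) :
    ∑ k ∈ Finset.range (N+1), f (k+1) = (∑ k ∈ Finset.range (N+1), f k) - f 0 := by
  rw [Finset.sum_range_succ (fun k => f (k+1)), h, add_zero, Finset.sum_range_succ']
  ring

lemma A_eq (N : ℕ) : ∀ j, (∑ k ∈ Finset.range (N+1), (-1:ℤ)^k * S1 N k * S2 k j)
    = if N = j then (-1)^N else 0 := by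
  induction N with
  | zero =>
    intro j
    rw [Finset.sum_range_one]
    match j with
    | 0 => norm_num [S1, S2]
    | j+1 => norm_num [S1, S2, S2_eq_zero 0 (j+1) (by omega)]
  | succ N ih =>
    intro j
    rw [Finset.sum_range_succ']
    have h0 : (-1:ℤ)^0 * S1 (N+1) 0 * S2 0 j = 0 := by
      show (-1:ℤ)^0 * ((0:ℕ):ℤ) * S2 0 j = 0; push_cast; ring
    rw [h0, add_zero]
    have hrec : ∀ k, (S1 (N+1) (k+1) : ℤ) = S1 N k + N * S1 N (k+1) := by
      intro k; show ((S1 N k + N * S1 N (k+1) : ℕ) : ℤ) = _; push_cast; ring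
    have hsplit : ∀ k ∈ Finset.range (N+1),
        (-1:ℤ)^(k+1) * S1 (N+1) (k+1) * S2 (k+1) j
        = -((-1:ℤ)^k * S1 N k * S2 (k+1) j)
          + N * ((-1:ℤ)^(k+1) * S1 N (k+1) * S2 (k+1) j) := by
      intro k _; rw [hrec]; ring
    rw [Finset.sum_congr rfl hsplit, Finset.sum_add_distrib, ← Finset.mul_sum]
    have hv : ∑ k ∈ Finset.range (N+1), (-1:ℤ)^(k+1) * (S1 N (k+1):ℤ) * (S2 (k+1) j:ℤ)
        = (∑ k ∈ Finset.range (N+1), (-1:ℤ)^k * (S1 N k:ℤ) * (S2 k j:ℤ))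
          - (-1:ℤ)^0 * (S1 N 0:ℤ) * (S2 0 j:ℤ) :=
      sum_shift (fun k => (-1:ℤ)^k * S1 N k * S2 k j) N (by
        show (-1:ℤ)^(N+1) * (S1 N (N+1):ℤ) * (S2 (N+1) j:ℤ) = 0
        rw [S1_eq_zero N (N+1) (by omega)]; push_cast; ring)
    rw [hv, ih j]
    have hv0 : (N:ℤ) * ((if N = j then (-1:ℤ)^N else 0) - (-1:ℤ)^0 * (S1 N 0:ℤ) * (S2 0 j:ℤ))
        = (N:ℤ) * (if N = j then (-1:ℤ)^N else 0) := by
      match N with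
      | 0 => push_cast; ring
      | N+1 =>
        rw [show (S1 (N+1) 0 : ℤ) = ((0:ℕ):ℤ) from rfl]
        push_cast; ring
    rw [hv0]
    match j with
    | 0 =>
      have hz : ∀ k ∈ Finset.range (N+1), -((-1:ℤ)^k * S1 N k * S2 (k+1) 0) = 0 := by
        intro k _
        show -((-1:ℤ)^k * S1 N k * ((0:ℕ):ℤ)) = 0
        push_cast; ring
      rw [Finset.sum_congr rfl hz, Finset.sum_const_zero, zero_add]
      rcases Nat.eq_zero_or_pos N with h | h
      · subst h; norm_num
      · rw [if_neg (by omega), if_neg (by omega), mul_zero]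
    | j+1 =>
      have hz : ∀ k ∈ Finset.range (N+1), -((-1:ℤ)^k * S1 N k * S2 (k+1) (j+1))
          = -((-1:ℤ)^k * S1 N k * S2 k j) + (-((j:ℤ)+1)) * ((-1:ℤ)^k * S1 N k * S2 k (j+1)) := by
        intro k _
        have h2 : (S2 (k+1) (j+1) : ℤ) = S2 k j + (j+1) * S2 k (j+1) := by
          show ((S2 k j + (j+1) * S2 k (j+1) : ℕ) : ℤ) = _; push_cast; ring
        rw [h2]; ring
      rw [Finset.sum_congr rfl hz, Finset.sum_add_distrib, ← Finset.mul_sum,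
        Finset.sum_neg_distrib, ih j, ih (j+1)]
      rcases eq_or_ne N j with h | h
      · subst h
        rw [if_pos rfl, if_neg (by omega), if_pos rfl]
        ring
      · rcases eq_or_ne N (j+1) with h2 | h2
        · subst h2
          rw [if_neg h, if_pos rfl, if_neg (by omega)]
          push_cast; ring
        · rw [if_neg h, if_neg h2, if_neg (by omega)]
          ring

lemma key (n N : ℕ) (hN : 1 ≤ N) :
    ∑ k ∈ Finset.Icc 1 N, (S1 N k : ℤ) * polyB n k
      = (Nat.factorial N : ℤ) * ((N:ℤ)+1)^n := by
  unfold polyB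
  have h1 : ∀ k ∈ Finset.Icc 1 N,
      (S1 N k : ℤ) * ∑ j ∈ Finset.Icc 1 k, (-1:ℤ)^(j+k) * (Nat.factorial j) * S2 k j * ((j:ℤ)+1)^n
      = ∑ j ∈ Finset.Icc 1 N, (-1:ℤ)^(j+k) * (Nat.factorial j) * S2 k j * ((j:ℤ)+1)^n * S1 N k := by
    intro k hk
    rw [Finset.mul_sum]
    rw [Finset.sum_subset (Finset.Icc_subset_Icc_right (Finset.mem_Icc.mp hk).2)]
    · exact Finset.sum_congr rfl (fun j _ => by ring)
    · intro j hj hj2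
      rw [S2_eq_zero k j (by simp only [Finset.mem_Icc] at hj hj2; omega)]
      push_cast; ring
  rw [Finset.sum_congr rfl h1, Finset.sum_comm]
  have h2 : ∀ j ∈ Finset.Icc 1 N,
      (∑ k ∈ Finset.Icc 1 N, (-1:ℤ)^(j+k) * (Nat.factorial j) * S2 k j * ((j:ℤ)+1)^n * S1 N k)
      = ((-1:ℤ)^j * (Nat.factorial j) * ((j:ℤ)+1)^n) *
          ∑ k ∈ Finset.Icc 1 N, (-1:ℤ)^k * S1 N k * S2 k j := by
    intro j _
    rw [Finset.mul_sum]
    exact Finset.sum_congr rfl (fun k _ => by rw [pow_add]; ring)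
  rw [Finset.sum_congr rfl h2]
  have hins : Finset.range (N+1) = insert 0 (Finset.Icc 1 N) := by
    ext x; simp only [Finset.mem_range, Finset.mem_insert, Finset.mem_Icc]; omega
  have h3 : ∀ j ∈ Finset.Icc 1 N,
      (∑ k ∈ Finset.Icc 1 N, (-1:ℤ)^k * S1 N k * S2 k j) = if N = j then (-1:ℤ)^N else 0 := by
    intro j _
    rw [← A_eq N j, hins, Finset.sum_insert (by simp)]
    match N, hN with
    | N+1, _ =>
      rw [show (S1 (N+1) 0 : ℤ) = ((0:ℕ):ℤ) from rfl]
      push_cast; ring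
  rw [Finset.sum_congr rfl (fun j hj => by rw [h3 j hj])]
  rw [Finset.sum_eq_single N]
  · rw [if_pos rfl]
    have : (-1:ℤ)^N * (-1:ℤ)^N = 1 := by
      rw [← pow_add]; exact Even.neg_one_pow ⟨N, rfl⟩
    calc ((-1:ℤ)^N * (Nat.factorial N) * ((N:ℤ)+1)^n) * (-1:ℤ)^N
        = ((-1:ℤ)^N * (-1:ℤ)^N) * ((Nat.factorial N) * ((N:ℤ)+1)^n) := by ring
      _ = _ := by rw [this]; ring
  · intro j _ hj; rw [if_neg (fun h => hj h.symm), mul_zero]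
  · intro h; exact absurd (Finset.mem_Icc.mpr ⟨hN, le_refl N⟩) h

theorem stmt_9 (m r n : ℕ) (hm : 1 ≤ m) (hr : 1 ≤ r) :
    (∑ l ∈ Finset.Icc 1 m,
        ((-1 : ℚ) ^ (l + m) * (Nat.factorial l) * S2 m l / (Nat.factorial (r + l - 1) : ℚ)) *
          ∑ k ∈ Finset.Icc 1 (r + l - 1), (S1 (r + l - 1) k : ℚ) * (polyB n k : ℚ)) =
      ∑ l ∈ Finset.Icc 1 m,
        (-1 : ℚ) ^ (l + m) * (Nat.factorial l) * S2 m l * ((r : ℚ) + l) ^ n := by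
  refine Finset.sum_congr rfl fun l hl => ?_
  obtain ⟨hl1, hlm⟩ := Finset.mem_Icc.mp hl
  have hN : 1 ≤ r + l - 1 := by omega
  have hkey := key n (r + l - 1) hN
  have hkeyQ : (∑ k ∈ Finset.Icc 1 (r + l - 1), (S1 (r + l - 1) k : ℚ) * (polyB n k : ℚ))
      = (Nat.factorial (r + l - 1) : ℚ) * ((r:ℚ) + l)^n := by
    have hcast : (((r + l - 1 : ℕ) : ℚ) + 1) = (r:ℚ) + l := by
      have h : (r + l - 1) + 1 = r + l := by omega
      calc ((r + l - 1 : ℕ) : ℚ) + 1 = (((r + l - 1) + 1 : ℕ) : ℚ) := by push_cast; ring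
        _ = ((r + l : ℕ) : ℚ) := by rw [h]
        _ = (r:ℚ) + l := by push_cast; ring
    rw [← hcast]
    exact_mod_cast congrArg (fun x : ℤ => (x : ℚ)) hkey
  rw [hkeyQ]
  have hfac : (Nat.factorial (r + l - 1) : ℚ) ≠ 0 := by
    exact_mod_cast (Nat.factorial_pos _).ne'
  field_simp
end

section
/- For integers k ≥ 1 and n ≥ 0, B_n^{(-k)} = Σ_{m=0}^{k-1} (-1)^{k-m-1} · binom(k,m) · B_n^{(-m,0)}, where B_n^{(-m,0)} = Σ_{l=1}^{m} (-1)^{l+m} l! S(m,l) (l+2)^n for m ≥ 1 and B_n^{(0,0)} = 2^n. -/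
open Finset

/-- Multi-poly-Bernoulli number `B_n^{(-m,0)}`. -/
def B2left (n m : ℕ) : ℤ :=
  if m = 0 then 2 ^ n
  else ∑ l ∈ Finset.Icc 1 m,
    (-1 : ℤ) ^ (l + m) * (Nat.factorial l) * S2 m l * ((l : ℤ) + 2) ^ n

lemma sum_Icc_one (f : ℕ → ℤ) (k : ℕ) :
    ∑ l ∈ Finset.Icc 1 k, f l = ∑ j ∈ Finset.range k, f (j + 1) := by
  induction k with
  | zero => simp
  | succ k ih =>
    rw [Finset.sum_Icc_succ_top (by omega), ih, Finset.sum_range_succ]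

lemma S2_zero_of_lt : ∀ n k : ℕ, n < k → S2 n k = 0 := by
  intro n
  induction n with
  | zero => intro k hk; cases k with
    | zero => omega
    | succ k => rfl
  | succ n ih =>
    intro k hk
    cases k with
    | zero => omega
    | succ k =>
      show S2 n k + (k + 1) * S2 n (k + 1) = 0
      rw [ih k (by omega), ih (k+1) (by omega)]
      ring

lemma S2_one : ∀ k : ℕ, S2 (k + 1) 1 = 1 := by
  intro k
  induction k with
  | zero => rfl
  | succ k ih =>
    show S2 (k+1) 0 + 1 * S2 (k+1) 1 = 1
    have : S2 (k+1) 0 = 0 := rfl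
    rw [this, ih]

lemma stirling_binom : ∀ n j : ℕ,
    ∑ m ∈ Finset.range (n + 1), n.choose m * S2 m j = S2 (n + 1) (j + 1) := by
  intro n
  induction n with
  | zero =>
    intro j
    cases j with
    | zero => simp [S2]
    | succ j => simp [S2, S2_zero_of_lt 0 (j+1) (by omega)]
  | succ n ih =>
    intro j
    rw [Finset.sum_range_succ' (fun m => (n+1).choose m * S2 m j) (n+1)]
    have pascal : ∀ m, (n+1).choose (m+1) = n.choose m + n.choose (m+1) :=
      fun m => Nat.choose_succ_succ n m
    have split : ∑ m ∈ Finset.range (n+1), (n+1).choose (m+1) * S2 (m+1) j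
        = (∑ m ∈ Finset.range (n+1), n.choose m * S2 (m+1) j)
          + ∑ m ∈ Finset.range (n+1), n.choose (m+1) * S2 (m+1) j := by
      rw [← Finset.sum_add_distrib]
      apply Finset.sum_congr rfl
      intro m _
      rw [pascal m, Nat.add_mul]
    have second : (∑ m ∈ Finset.range (n+1), n.choose (m+1) * S2 (m+1) j)
        + (n+1).choose 0 * S2 0 j = S2 (n+1) (j+1) := by
      have : (∑ m ∈ Finset.range (n+1), n.choose (m+1) * S2 (m+1) j)
          + (n+1).choose 0 * S2 0 j
          = ∑ m ∈ Finset.range (n+2), n.choose m * S2 m j := by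
        rw [Finset.sum_range_succ' (fun m => n.choose m * S2 m j) (n+1)]
        simp
      rw [this, Finset.sum_range_succ, Nat.choose_succ_self, ih j]
      simp
    rw [split, add_assoc, second]
    cases j with
    | zero =>
      have h0 : ∑ m ∈ Finset.range (n+1), n.choose m * S2 (m+1) 0 = 0 := by
        apply Finset.sum_eq_zero
        intro m _
        have : S2 (m+1) 0 = 0 := rfl
        rw [this, Nat.mul_zero]
      rw [h0]
      show 0 + S2 (n+1) (0+1) = S2 (n+1) 0 + (0+1) * S2 (n+1) (0+1)
      have h00 : S2 (n+1) 0 = 0 := rfl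
      omega
    | succ j =>
      have h1 : ∑ m ∈ Finset.range (n+1), n.choose m * S2 (m+1) (j+1)
          = (∑ m ∈ Finset.range (n+1), n.choose m * S2 m j)
            + (j+1) * ∑ m ∈ Finset.range (n+1), n.choose m * S2 m (j+1) := by
        rw [Finset.mul_sum, ← Finset.sum_add_distrib]
        apply Finset.sum_congr rfl
        intro m _
        show n.choose m * (S2 m j + (j+1) * S2 m (j+1)) = _
        ring
      rw [h1, ih j, ih (j+1)]
      have hrec : S2 (n+1+1) (j+1+1) = S2 (n+1) (j+1) + (j+1+1) * S2 (n+1) (j+1+1) := rfl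
      simp only [show ∀ a : ℕ, a+1+1 = a+2 from fun a => rfl] at hrec ⊢
      rw [hrec]; ring
    
lemma key_nat (K j : ℕ) :
    ∑ m ∈ Finset.range K, (K+1).choose (m+1) * S2 (m+1) (j+1)
      = (j + 2) * S2 (K+1) (j+2) := by
  have h := stirling_binom (K+1) (j+1)
  rw [Finset.sum_range_succ, Finset.sum_range_succ'] at h
  simp only [Nat.choose_zero_right, Nat.choose_self, one_mul,
    S2_zero_of_lt 0 (j+1) (by omega), Nat.mul_zero, add_zero,
    show ∀ a : ℕ, a+1+1 = a+2 from fun a => rfl] at h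
  have hrec : S2 (K+2) (j+2) = S2 (K+1) (j+1) + (j+2) * S2 (K+1) (j+2) := rfl
  rw [hrec] at h
  omega

lemma neg_one_pow_congr_mod2 (a b : ℕ) (h : a % 2 = b % 2) : (-1 : ℤ) ^ a = (-1 : ℤ) ^ b := by
  rcases Nat.even_or_odd a with h1 | h1
  · have ha := Nat.even_iff.mp h1
    rw [h1.neg_one_pow, (Nat.even_iff.mpr (by omega : b % 2 = 0)).neg_one_pow]
  · have ha := Nat.odd_iff.mp h1
    rw [h1.neg_one_pow, (Nat.odd_iff.mpr (by omega : b % 2 = 1)).neg_one_pow]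

theorem stmt_13 (k n : ℕ) (hk : 1 ≤ k) :
    polyB n k =
      ∑ m ∈ Finset.range k,
        (-1 : ℤ) ^ (k - m - 1) * (Nat.choose k m) * B2left n m := by
  obtain ⟨K, rfl⟩ : ∃ K, k = K + 1 := ⟨k - 1, by omega⟩
  have lhs_eq : polyB n (K+1)
      = ∑ j ∈ Finset.range (K+1),
          (-1:ℤ)^(j+K) * (Nat.factorial (j+1)) * S2 (K+1) (j+1) * ((j:ℤ)+2)^n := by
    unfold polyB
    rw [sum_Icc_one]
    apply Finset.sum_congr rfl
    intro j _
    rw [neg_one_pow_congr_mod2 ((j+1)+(K+1)) (j+K) (by omega)]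
    push_cast
    ring
  rw [lhs_eq]
  -- now transform the RHS
  rw [Finset.sum_range_succ'
    (fun m => (-1:ℤ)^(K+1-m-1) * ((K+1).choose m) * B2left n m) K]
  have h0 : (-1:ℤ)^(K+1-0-1) * ((K+1).choose 0) * B2left n 0 = (-1:ℤ)^K * 2^n := by
    simp [B2left]
  rw [h0]
  have hterm : ∀ m ∈ Finset.range K,
      (-1:ℤ)^(K+1-(m+1)-1) * ((K+1).choose (m+1)) * B2left n (m+1)
      = ∑ j ∈ Finset.range K,
          (-1:ℤ)^(K-m-1) * ((K+1).choose (m+1))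
            * ((-1:ℤ)^(j+m) * (Nat.factorial (j+1)) * S2 (m+1) (j+1) * ((j:ℤ)+3)^n) := by
    intro m hm
    rw [Finset.mem_range] at hm
    have hB : B2left n (m+1)
        = ∑ j ∈ Finset.range (m+1),
            (-1:ℤ)^(j+m) * (Nat.factorial (j+1)) * S2 (m+1) (j+1) * ((j:ℤ)+3)^n := by
      unfold B2left
      rw [if_neg (by omega), sum_Icc_one]
      apply Finset.sum_congr rfl
      intro j _
      rw [neg_one_pow_congr_mod2 ((j+1)+(m+1)) (j+m) (by omega)]
      push_cast
      ring
    rw [hB, Finset.mul_sum]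
    have hsub : Finset.range (m+1) ⊆ Finset.range K := by
      intro x hx; rw [Finset.mem_range] at *; omega
    rw [show K+1-(m+1)-1 = K-m-1 by omega]
    apply Finset.sum_subset hsub
    intro j hj hj2
    rw [Finset.mem_range] at hj hj2
    have : S2 (m+1) (j+1) = 0 := S2_zero_of_lt (m+1) (j+1) (by omega)
    rw [this]
    push_cast
    ring
  rw [Finset.sum_congr rfl hterm, Finset.sum_comm]
  have hj : ∀ j ∈ Finset.range K,
      (∑ m ∈ Finset.range K,
        (-1:ℤ)^(K-m-1) * ((K+1).choose (m+1))
          * ((-1:ℤ)^(j+m) * (Nat.factorial (j+1)) * S2 (m+1) (j+1) * ((j:ℤ)+3)^n))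
      = (-1:ℤ)^(K+j+1) * (Nat.factorial (j+1)) * ((j:ℤ)+3)^n
          * (((j:ℤ)+2) * S2 (K+1) (j+2)) := by
    intro j _
    have step1 : ∀ m ∈ Finset.range K,
        (-1:ℤ)^(K-m-1) * ((K+1).choose (m+1))
          * ((-1:ℤ)^(j+m) * (Nat.factorial (j+1)) * S2 (m+1) (j+1) * ((j:ℤ)+3)^n)
        = (-1:ℤ)^(K+j+1) * (Nat.factorial (j+1)) * ((j:ℤ)+3)^n
            * (((K+1).choose (m+1) : ℤ) * (S2 (m+1) (j+1) : ℤ)) := by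
      intro m hm
      rw [Finset.mem_range] at hm
      have hs : (-1:ℤ)^(K-m-1) * (-1:ℤ)^(j+m) = (-1:ℤ)^(K+j+1) := by
        rw [← pow_add]
        exact neg_one_pow_congr_mod2 (K-m-1+(j+m)) (K+j+1) (by omega)
      calc (-1:ℤ)^(K-m-1) * ((K+1).choose (m+1))
          * ((-1:ℤ)^(j+m) * (Nat.factorial (j+1)) * S2 (m+1) (j+1) * ((j:ℤ)+3)^n)
          = ((-1:ℤ)^(K-m-1) * (-1:ℤ)^(j+m)) * (Nat.factorial (j+1)) * ((j:ℤ)+3)^n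
            * (((K+1).choose (m+1) : ℤ) * (S2 (m+1) (j+1) : ℤ)) := by ring
        _ = _ := by rw [hs]
    rw [Finset.sum_congr rfl step1, ← Finset.mul_sum]
    congr 1
    have hc : ∑ m ∈ Finset.range K, (((K+1).choose (m+1) : ℤ) * (S2 (m+1) (j+1) : ℤ))
        = ((∑ m ∈ Finset.range K, (K+1).choose (m+1) * S2 (m+1) (j+1) : ℕ) : ℤ) := by
      push_cast
      rfl
    rw [hc, key_nat K j]
    push_cast
    ring
  rw [Finset.sum_congr rfl hj]
  rw [Finset.sum_range_succ'
    (fun j => (-1:ℤ)^(j+K) * (Nat.factorial (j+1)) * S2 (K+1) (j+1) * ((j:ℤ)+2)^n) K]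
  congr 1
  · apply Finset.sum_congr rfl
    intro j _
    rw [neg_one_pow_congr_mod2 (K+j+1) ((j+1)+K) (by omega),
      show Nat.factorial (j+1+1) = (j+2) * Nat.factorial (j+1) by
        rw [Nat.factorial_succ]]
    push_cast
    ring
  · simp [S2_one, Nat.factorial]
end
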